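/- Let Q be a symmetric n×n real matrix and f ∈ ℝⁿ. Suppose σ̄ ∈ ℝⁿ is such that Q_d(σ̄) = Q + 2Diag(σ̄) is invertible and σ̄ is a critical point of P^d(σ) = -(1/2)(f+σ)ᵀ[Q_d(σ)]⁻¹(f+σ). Then x̄ := [Q_d(σ̄)]⁻¹(f+σ̄) satisfies x̄_i ∈ {0,1} for all i. -/

import Mathlib

open Matrix

attribute [local instance] Matrix.linftyOpNormedRing Matrix.linftyOpNormedAlgebra

private theorem aux_inv_deriv (n : ℕ) (M0 D : Matrix (Fin n) (Fin n) ℝ) (h : IsUnit M0) :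
    HasDerivAt (fun t : ℝ => Ring.inverse (M0 + t • D)) (-(M0⁻¹ * D * M0⁻¹)) 0 := by
  have h1 : HasDerivAt (fun t : ℝ => M0 + t • D) D 0 := by
    have h0 := ((hasDerivAt_id (0:ℝ)).smul_const D).const_add M0
    simp only [id_eq, one_smul] at h0
    exact h0
  have h2 := hasFDerivAt_ringInverse (𝕜 := ℝ) h.unit
  rw [h.unit_spec] at h2
  have h3 := HasFDerivAt.comp_hasDerivAt 0 (by simpa using h2) h1
  have h4 : ((-(ContinuousLinearMap.mulLeftRight ℝ (Matrix (Fin n) (Fin n) ℝ)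
      (M0⁻¹) (M0⁻¹))) D) = -(M0⁻¹ * D * M0⁻¹) := by
    rw [ContinuousLinearMap.neg_apply, ContinuousLinearMap.mulLeftRight_apply]
  rw [h4] at h3
  exact h3

private theorem aux_entry_deriv (n : ℕ) (N : ℝ → Matrix (Fin n) (Fin n) ℝ)
    (N' : Matrix (Fin n) (Fin n) ℝ)
    (h : HasDerivAt N N' 0) (i j : Fin n) :
    HasDerivAt (fun t => N t i j) (N' i j) 0 := by
  have hc : HasFDerivAt (fun A : Matrix (Fin n) (Fin n) ℝ => A i j)
      (LinearMap.toContinuousLinearMap (Matrix.entryLinearMap ℝ ℝ i j)) (N 0) :=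
    (LinearMap.toContinuousLinearMap (Matrix.entryLinearMap ℝ ℝ i j)).hasFDerivAt
  have h' := hc.comp_hasDerivAt 0 h
  exact h'

theorem critical_point_gives_binary_x
    (n : ℕ) (Q : Matrix (Fin n) (Fin n) ℝ) (hQ : Q.IsSymm) (f : Fin n → ℝ)
    (Pd : (Fin n → ℝ) → ℝ)
    (hPd : ∀ σ, Pd σ =
      -(1 / 2 : ℝ) * ((f + σ) ⬝ᵥ (Q + 2 • Matrix.diagonal σ)⁻¹.mulVec (f + σ)))
    (σb : Fin n → ℝ) (hdet : IsUnit (Q + 2 • Matrix.diagonal σb).det)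
    (hcrit : HasFDerivAt Pd (0 : (Fin n → ℝ) →L[ℝ] ℝ) σb)
    (xb : Fin n → ℝ) (hxb : xb = (Q + 2 • Matrix.diagonal σb)⁻¹.mulVec (f + σb)) :
    ∀ i, xb i = 0 ∨ xb i = 1 := by
  intro i0
  set e : Fin n → ℝ := Pi.single i0 1 with he
  set M0 : Matrix (Fin n) (Fin n) ℝ := Q + 2 • Matrix.diagonal σb with hM0
  set D : Matrix (Fin n) (Fin n) ℝ := 2 • Matrix.diagonal e with hD
  set A : Matrix (Fin n) (Fin n) ℝ := M0⁻¹ with hA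
  have hM0unit : IsUnit M0 := (Matrix.isUnit_iff_isUnit_det M0).2 hdet
  -- the line σb + t • e
  have hMline : ∀ t : ℝ, Q + 2 • Matrix.diagonal (σb + t • e) = M0 + t • D := by
    intro t
    rw [hM0, hD]
    ext a b
    simp only [Matrix.add_apply, Matrix.smul_apply, Pi.add_apply, Pi.smul_apply,
      Matrix.diagonal_apply]
    simp only [smul_eq_mul, nsmul_eq_mul, Nat.cast_ofNat]
    split_ifs <;> ring
  set N : ℝ → Matrix (Fin n) (Fin n) ℝ := fun t => Ring.inverse (M0 + t • D) with hN
  set N' : Matrix (Fin n) (Fin n) ℝ := -(A * D * A) with hN'def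
  have hNder : HasDerivAt N N' 0 := aux_inv_deriv n M0 D hM0unit
  have hN0 : N 0 = A := by
    simp [hN, hA, Matrix.nonsing_inv_eq_ringInverse]
  -- explicit formula for Pd along the line
  have hφeq : ∀ t : ℝ, Pd (σb + t • e) =
      -(1 / 2 : ℝ) * ∑ i, ((f i + σb i + t * e i) * ∑ j, N t i j * (f j + σb j + t * e j)) := by
    intro t
    rw [hPd, hMline t, Matrix.nonsing_inv_eq_ringInverse]
    simp only [dotProduct, Matrix.mulVec, Pi.add_apply, Pi.smul_apply, smul_eq_mul,
      add_assoc, hN]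
  -- derivative of the explicit formula
  set c : ℝ := -(1 / 2 : ℝ) * ∑ i, (e i * (∑ j, A i j * (f j + σb j)) +
      (f i + σb i) * (∑ j, (N' i j * (f j + σb j) + A i j * e j))) with hc
  have hterm : ∀ i j, HasDerivAt (fun t => N t i j * (f j + σb j + t * e j))
      (N' i j * (f j + σb j) + A i j * e j) 0 := by
    intro i j
    have h1 : HasDerivAt (fun t => N t i j) (N' i j) 0 := aux_entry_deriv n N N' hNder i j
    have h2 : HasDerivAt (fun t : ℝ => f j + σb j + t * e j) (e j) 0 := by
      simpa using ((hasDerivAt_id (0:ℝ)).mul_const (e j)).const_add (f j + σb j)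
    have h3 := h1.mul h2
    simp [hN0] at h3
    exact h3
  have houter : ∀ i, HasDerivAt
      (fun t => (f i + σb i + t * e i) * ∑ j, N t i j * (f j + σb j + t * e j))
      (e i * (∑ j, A i j * (f j + σb j)) +
        (f i + σb i) * (∑ j, (N' i j * (f j + σb j) + A i j * e j))) 0 := by
    intro i
    have h2 : HasDerivAt (fun t : ℝ => f i + σb i + t * e i) (e i) 0 := by
      simpa using ((hasDerivAt_id (0:ℝ)).mul_const (e i)).const_add (f i + σb i)
    have hin : HasDerivAt (fun t => ∑ j, N t i j * (f j + σb j + t * e j))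
        (∑ j, (N' i j * (f j + σb j) + A i j * e j)) 0 :=
      HasDerivAt.fun_sum fun j _ => hterm i j
    have h3 := h2.mul hin
    simp [hN0] at h3
    exact h3
  have hF : HasDerivAt (fun t : ℝ => Pd (σb + t • e)) c 0 := by
    have hsum := HasDerivAt.fun_sum (fun i (_ : i ∈ Finset.univ) => houter i)
    have := hsum.const_mul (-(1 / 2 : ℝ))
    rw [show (fun t : ℝ => Pd (σb + t • e)) = fun t =>
      -(1 / 2 : ℝ) * ∑ i, ((f i + σb i + t * e i) * ∑ j, N t i j * (f j + σb j + t * e j))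
      from funext hφeq]
    exact this
  -- derivative from criticality is 0
  have hline : HasDerivAt (fun t : ℝ => σb + t • e) e 0 := by
    simpa using ((hasDerivAt_id (0:ℝ)).smul_const e).const_add σb
  have hzero : HasDerivAt (fun t : ℝ => Pd (σb + t • e)) 0 0 := by
    have h0 : σb + (0:ℝ) • e = σb := by simp
    have h1 := HasFDerivAt.comp_hasDerivAt 0 (h0.symm ▸ hcrit) hline
    simp at h1
    exact h1
  have hc0 : c = 0 := hF.unique hzero
  -- now the algebra
  have hx : ∀ k, xb k = ∑ j, A k j * (f j + σb j) := by
    intro k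
    rw [hxb]
    simp [Matrix.mulVec, dotProduct, hA, hM0]
  have hM0sym : M0ᵀ = M0 := by
    rw [hM0, Matrix.transpose_add, Matrix.transpose_smul, Matrix.diagonal_transpose, hQ]
  have hAsym : Aᵀ = A := by
    rw [hA, Matrix.transpose_nonsing_inv, hM0sym]
  have hsymA : ∀ i j, A i j = A j i := by
    intro i j
    conv_lhs => rw [← hAsym]
    rfl
  have hN'entry : ∀ i j, N' i j = -(2 * A i i0 * A i0 j) := by
    intro i j
    have hDdiag : D = Matrix.diagonal ((2:ℕ) • e) := by
      rw [hD, Matrix.diagonal_smul]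
    rw [hN'def, Matrix.neg_apply, Matrix.mul_apply]
    simp only [hDdiag, Matrix.mul_diagonal, Pi.smul_apply, nsmul_eq_mul, Nat.cast_ofNat,
      Pi.mul_apply, Pi.ofNat_apply]
    simp only [he, Pi.single_apply, mul_ite, ite_mul, mul_zero, zero_mul, mul_one,
      Finset.sum_ite_eq, Finset.sum_ite_eq', Finset.mem_univ, if_true]
    ring
  have hinner2 : ∀ i, (∑ j, (N' i j * (f j + σb j) + A i j * e j)) =
      -(2 * A i i0 * xb i0) + A i i0 := by
    intro i
    rw [Finset.sum_add_distrib]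
    congr 1
    · calc ∑ j, N' i j * (f j + σb j)
          = ∑ j, (-(2 * A i i0)) * (A i0 j * (f j + σb j)) := by
            apply Finset.sum_congr rfl
            intro j _
            rw [hN'entry i j]; ring
        _ = (-(2 * A i i0)) * ∑ j, A i0 j * (f j + σb j) := (Finset.mul_sum _ _ _).symm
        _ = -(2 * A i i0 * xb i0) := by rw [← hx i0]; ring
    · simp [he, Pi.single_apply, mul_ite, Finset.sum_ite_eq']
  have hAcol : ∑ i, (f i + σb i) * A i i0 = xb i0 := by
    rw [hx i0]
    apply Finset.sum_congr rfl
    intro i _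
    rw [hsymA i i0]; ring
  have hcval : c = xb i0 ^ 2 - xb i0 := by
    rw [hc]
    have : ∀ i, e i * (∑ j, A i j * (f j + σb j)) +
        (f i + σb i) * (∑ j, (N' i j * (f j + σb j) + A i j * e j)) =
        e i * xb i + ((f i + σb i) * A i i0) * (-(2 * xb i0) + 1) := by
      intro i
      rw [hinner2 i, ← hx i]; ring
    rw [Finset.sum_congr rfl fun i _ => this i]
    rw [Finset.sum_add_distrib, ← Finset.sum_mul, hAcol]
    have he1 : ∑ i, e i * xb i = xb i0 := by
      simp [he, Pi.single_apply, ite_mul, Finset.sum_ite_eq]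
    rw [he1]; ring
  have : xb i0 * (xb i0 - 1) = 0 := by
    rw [hcval] at hc0; nlinarith [hc0]
  rcases mul_eq_zero.1 this with h | h
  · exact Or.inl h
  · exact Or.inr (by linarith)
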